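/- Under the same hypotheses as the constraint-gap theorem, choosing λ = ‖y*‖₂²/(2ε), any ε-minimizer x^N of F satisfies f(x^N) − f(x*) ≤ ε and ‖√W x^N‖₂ ≤ 6ε/‖y*‖₂ (in particular the bound 2R_y/λ + √(2ε/λ) evaluates to 4ε/R_y + 2ε/R_y where R_y = ‖y*‖₂). -/

import Mathlib

open Matrix

section

open scoped ComplexOrder

/-- The positive semidefinite square root of a positive semidefinite matrix
(the definition `Matrix.PosSemidef.sqrt` of the older Mathlib, since removed). -/
noncomputable def Matrix.PosSemidef.sqrt {n 𝕜 : Type*} [Fintype n] [RCLike 𝕜] [DecidableEq n]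
    {A : Matrix n n 𝕜} (hA : A.PosSemidef) : Matrix n n 𝕜 :=
  hA.1.eigenvectorUnitary.1 * diagonal ((↑) ∘ (√·) ∘ hA.1.eigenvalues) *
    (star hA.1.eigenvectorUnitary : Matrix n n 𝕜)

end

theorem stmt6_sqrt_mul_self {n : Type*} [Fintype n] [DecidableEq n]
    {A : Matrix n n ℝ} (hA : A.PosSemidef) : hA.sqrt * hA.sqrt = A := by
  have hU : (star hA.1.eigenvectorUnitary : Matrix n n ℝ) * hA.1.eigenvectorUnitary.1 = 1 :=
    Unitary.coe_star_mul_self _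
  conv_rhs => rw [hA.1.spectral_theorem, Unitary.conjStarAlgAut_apply]
  simp only [Matrix.PosSemidef.sqrt]
  rw [show ∀ a b c d e f : Matrix n n ℝ, a * b * c * (d * e * f) = a * b * (c * d) * e * f from
    fun a b c d e f => by simp only [Matrix.mul_assoc], hU, Matrix.mul_one,
    Matrix.mul_assoc (hA.1.eigenvectorUnitary.1 : Matrix n n ℝ), diagonal_mul_diagonal]
  congr 3
  funext i
  simp [Real.mul_self_sqrt (hA.eigenvalues_nonneg i)]

theorem stmt6_sqrt_isHermitian {n : Type*} [Fintype n] [DecidableEq n]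
    {A : Matrix n n ℝ} (hA : A.PosSemidef) : hA.sqrt.IsHermitian := by
  simp only [Matrix.IsHermitian, Matrix.PosSemidef.sqrt, conjTranspose_mul, star_star,
    diagonal_conjTranspose, Matrix.mul_assoc]
  congr 2

/-- Constraint gap with the choice `λ = ‖y*‖²/(2ε)`: an `ε`-minimizer `x^N` of `F`
satisfies `f(x^N) − f(x*) ≤ ε` and `‖√W x^N‖ ≤ 6ε/‖y*‖`; in particular the generic
bound `2R_y/λ + √(2ε/λ)` evaluates to `4ε/R_y + 2ε/R_y`. -/
theorem stmt6 {N : ℕ} (f : (Fin N → ℝ) → ℝ) (hf : ConvexOn ℝ Set.univ f)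
    (W : Matrix (Fin N) (Fin N) ℝ) (hW : W.PosSemidef)
    (lam ε : ℝ) (hε : 0 < ε)
    (xstar ystar xF xN : Fin N → ℝ)
    (hRy : 0 < Real.sqrt (ystar ⬝ᵥ ystar))
    (hlamdef : lam = (ystar ⬝ᵥ ystar) / (2 * ε))
    (hfeas : hW.sqrt.mulVec xstar = 0)
    (hlag : ∀ x : Fin N → ℝ,
      f xstar - ystar ⬝ᵥ hW.sqrt.mulVec xstar ≤ f x - ystar ⬝ᵥ hW.sqrt.mulVec x)
    (hxF : ∀ y : Fin N → ℝ,
      f xF + lam / 2 * (xF ⬝ᵥ W.mulVec xF) ≤ f y + lam / 2 * (y ⬝ᵥ W.mulVec y))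
    (hN : f xN + lam / 2 * (xN ⬝ᵥ W.mulVec xN)
        - (f xF + lam / 2 * (xF ⬝ᵥ W.mulVec xF)) ≤ ε) :
    f xN - f xstar ≤ ε ∧
    Real.sqrt (hW.sqrt.mulVec xN ⬝ᵥ hW.sqrt.mulVec xN) ≤
      6 * ε / Real.sqrt (ystar ⬝ᵥ ystar) ∧
    2 * Real.sqrt (ystar ⬝ᵥ ystar) / lam + Real.sqrt (2 * ε / lam) =
      4 * ε / Real.sqrt (ystar ⬝ᵥ ystar) + 2 * ε / Real.sqrt (ystar ⬝ᵥ ystar) := by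
  set R : ℝ := Real.sqrt (ystar ⬝ᵥ ystar) with hR
  have hyy : (0:ℝ) ≤ ystar ⬝ᵥ ystar :=
    Finset.sum_nonneg fun i _ => mul_self_nonneg _
  have hR2 : R ^ 2 = ystar ⬝ᵥ ystar := Real.sq_sqrt hyy
  have hlam : 0 < lam := by
    rw [hlamdef]
    have : 0 < ystar ⬝ᵥ ystar := by nlinarith [hRy]
    positivity
  -- quadratic form identity
  have hquad : ∀ x : Fin N → ℝ,
      x ⬝ᵥ W.mulVec x = hW.sqrt.mulVec x ⬝ᵥ hW.sqrt.mulVec x := by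
    intro x
    conv_lhs => rw [← stmt6_sqrt_mul_self hW]
    rw [← mulVec_mulVec, dotProduct_mulVec, ← mulVec_transpose]
    have hsymm : hW.sqrtᵀ = hW.sqrt := by
      have := stmt6_sqrt_isHermitian hW
      simpa [Matrix.IsHermitian] using this
    rw [hsymm]
  set v : Fin N → ℝ := hW.sqrt.mulVec xN with hv
  have hvv : (0:ℝ) ≤ v ⬝ᵥ v := Finset.sum_nonneg fun i _ => mul_self_nonneg _
  set t : ℝ := Real.sqrt (v ⬝ᵥ v) with ht
  have ht0 : 0 ≤ t := Real.sqrt_nonneg _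
  have ht2 : t ^ 2 = v ⬝ᵥ v := Real.sq_sqrt hvv
  -- F(xN) ≤ f(xstar) + ε
  have hstar0 : xstar ⬝ᵥ W.mulVec xstar = 0 := by
    rw [hquad, hfeas]; simp
  have hFN : f xN + lam / 2 * (v ⬝ᵥ v) ≤ f xstar + ε := by
    have h1 := hxF xstar
    rw [hstar0] at h1
    have := hquad xN
    rw [this] at hN
    linarith
  -- Lagrangian lower bound
  have hlagN : f xstar + ystar ⬝ᵥ v ≤ f xN := by
    have := hlag xN
    rw [hfeas] at this
    simp only [dotProduct_zero] at this
    linarith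
  -- Cauchy–Schwarz: -(ystar ⬝ᵥ v) ≤ R * t
  have hcs : -(ystar ⬝ᵥ v) ≤ R * t := by
    have cs : (ystar ⬝ᵥ v) ^ 2 ≤ (ystar ⬝ᵥ ystar) * (v ⬝ᵥ v) := by
      simpa [dotProduct, sq, Finset.sum_mul_sq_le_sq_mul_sq, mul_pow] using
        Finset.sum_mul_sq_le_sq_mul_sq Finset.univ ystar v
    have : (ystar ⬝ᵥ v) ^ 2 ≤ (R * t) ^ 2 := by
      rw [mul_pow, hR2, ht2]; exact cs
    have habs : |ystar ⬝ᵥ v| ≤ R * t := by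
      have h2 := Real.sqrt_le_sqrt this
      rwa [Real.sqrt_sq_eq_abs, Real.sqrt_sq (by positivity)] at h2
    linarith [neg_abs_le (ystar ⬝ᵥ v), habs]
  -- part 1
  have part1 : f xN - f xstar ≤ ε := by nlinarith [hFN, hvv, hlam.le]
  -- key quadratic inequality: (lam/2) t² ≤ ε + R t
  have hkey : lam / 2 * t ^ 2 ≤ ε + R * t := by
    rw [ht2]; nlinarith [hFN, hlagN, hcs]
  have part2 : t ≤ 6 * ε / R := by
    rw [le_div_iff₀ hRy]
    have hlamval : lam = R ^ 2 / (2 * ε) := by rw [hlamdef, hR2]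
    rw [hlamval] at hkey
    have hkey2 : R ^ 2 * t ^ 2 ≤ 4 * ε ^ 2 + 4 * ε * (R * t) := by
      rw [div_div, div_mul_eq_mul_div, div_le_iff₀ (by linarith : (0:ℝ) < 2 * ε * 2)] at hkey
      nlinarith [hkey]
    nlinarith [hkey2, hε, ht0, hRy, mul_nonneg ht0 hRy.le]
  have part3 : 2 * R / lam + Real.sqrt (2 * ε / lam) =
      4 * ε / R + 2 * ε / R := by
    have hlamval : lam = R ^ 2 / (2 * ε) := by rw [hlamdef, hR2]
    have h1 : 2 * R / lam = 4 * ε / R := by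
      rw [hlamval]; field_simp; ring
    have h2 : Real.sqrt (2 * ε / lam) = 2 * ε / R := by
      rw [hlamval]
      have : 2 * ε / (R ^ 2 / (2 * ε)) = (2 * ε / R) ^ 2 := by
        field_simp
      rw [this, Real.sqrt_sq (by positivity)]
    rw [h1, h2]
  exact ⟨part1, part2, part3⟩
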